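/- Let α > 0, r₂ > 0, c₂ > 0, c₃ > 0 with c₂ ≠ c₃, and 0 < q₃ < q₂ < 1. Define g₃ on the set { (γ, p₂, p₃) : γ > 0, 0 < p₃ < p₂ < 1 } by g₃(γ, p₂, p₃) = (r₂²/2)·(1 − p₂·q₂)·c₂ + (r₂²/2)·(p₂·q₂ − p₃·q₃)·c₃ + γ·r₂ + α·r₂·[ (1/(2c₂r₂))·log( T₂/(2γ) ) + (1/(2c₃r₂))·log( T₃/T₂ ) + p₃/(2T₃) ], where T₂ = 2γ + c₂r₂(1−p₂) and T₃ = 2γ + c₂r₂(1−p₂) + c₃r₂(p₂−p₃). If (γ̂, p̂₂, p̂₃) is a point of this set at which all three partial derivatives ∂g₃/∂γ, ∂g₃/∂p₂, ∂g₃/∂p₃ vanish, then γ̂ = (√α/2)·((1 − p̂₂)/(1 − q₂))·((q₂ − q₃)/(p̂₂ − p̂₃))·√(p̂₃/q₃), c₂ = (√α/r₂)·( (1/(1 − p̂₂))·((p̂₂ − p̂₃)/(q₂ − q₃))·√(q₃/p̂₃) − (1/(1 − q₂))·((q₂ − q₃)/(p̂₂ − p̂₃))·√(p̂₃/q₃)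 ), and c₃ = (√α/r₂)·( (1/(p̂₂ − p̂₃))·√(p̂₃/q₃) − (1/(q₂ − q₃))·√(q₃/p̂₃) ). -/

import Mathlib

set_option maxHeartbeats 2000000


/-- Closed-form third-level relations: if `(γ̂, p̂₂, p̂₃)` is a stationary point of
the `(γ_sq, p₂, p₃)`-dependent part `g₃` of the third-level lifted random dual,
then `γ̂`, `c₂` and `c₃` satisfy the stated closed-form expressions. -/
theorem stmt17 (α r₂ c₂ c₃ q₂ q₃ : ℝ) (hα : 0 < α) (hr : 0 < r₂)
    (hc₂ : 0 < c₂) (hc₃ : 0 < c₃) (hcc : c₂ ≠ c₃)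
    (hq₃ : 0 < q₃) (hq₂₃ : q₃ < q₂) (hq₂ : q₂ < 1)
    (g₃ : ℝ → ℝ → ℝ → ℝ)
    (hg₃ : ∀ γ p₂ p₃, g₃ γ p₂ p₃ =
      (r₂ ^ 2 / 2) * (1 - p₂ * q₂) * c₂ + (r₂ ^ 2 / 2) * (p₂ * q₂ - p₃ * q₃) * c₃
      + γ * r₂
      + α * r₂ * ((1 / (2 * c₂ * r₂)) *
            Real.log ((2 * γ + c₂ * r₂ * (1 - p₂)) / (2 * γ))
          + (1 / (2 * c₃ * r₂)) *
            Real.log ((2 * γ + c₂ * r₂ * (1 - p₂) + c₃ * r₂ * (p₂ - p₃)) /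
              (2 * γ + c₂ * r₂ * (1 - p₂)))
          + p₃ / (2 * (2 * γ + c₂ * r₂ * (1 - p₂) + c₃ * r₂ * (p₂ - p₃)))))
    (γhat p₂hat p₃hat : ℝ) (hγhat : 0 < γhat)
    (hp₃hat : 0 < p₃hat) (hp₂₃hat : p₃hat < p₂hat) (hp₂hat : p₂hat < 1)
    (h₁ : HasDerivAt (fun γ => g₃ γ p₂hat p₃hat) 0 γhat)
    (h₂ : HasDerivAt (fun p₂ => g₃ γhat p₂ p₃hat) 0 p₂hat)
    (h₃ : HasDerivAt (fun p₃ => g₃ γhat p₂hat p₃) 0 p₃hat) :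
    γhat = (Real.sqrt α / 2) * ((1 - p₂hat) / (1 - q₂)) *
        ((q₂ - q₃) / (p₂hat - p₃hat)) * Real.sqrt (p₃hat / q₃) ∧
    c₂ = (Real.sqrt α / r₂) *
        ((1 / (1 - p₂hat)) * ((p₂hat - p₃hat) / (q₂ - q₃)) * Real.sqrt (q₃ / p₃hat)
          - (1 / (1 - q₂)) * ((q₂ - q₃) / (p₂hat - p₃hat)) * Real.sqrt (p₃hat / q₃)) ∧
    c₃ = (Real.sqrt α / r₂) *
        ((1 / (p₂hat - p₃hat)) * Real.sqrt (p₃hat / q₃)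
          - (1 / (q₂ - q₃)) * Real.sqrt (q₃ / p₃hat)) := by
  have h1p : 0 < 1 - p₂hat := by linarith
  have hpp : 0 < p₂hat - p₃hat := by linarith
  have ht2 : 0 < 2 * γhat + c₂ * r₂ * (1 - p₂hat) := by
    have := mul_pos (mul_pos hc₂ hr) h1p; linarith
  have ht3 : 0 < 2 * γhat + c₂ * r₂ * (1 - p₂hat) + c₃ * r₂ * (p₂hat - p₃hat) := by
    have := mul_pos (mul_pos hc₃ hr) hpp; linarith
  set t2 : ℝ := 2 * γhat + c₂ * r₂ * (1 - p₂hat) with ht2def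
  set t3 : ℝ := 2 * γhat + c₂ * r₂ * (1 - p₂hat) + c₃ * r₂ * (p₂hat - p₃hat) with ht3def
  simp only [hg₃] at h₁ h₂ h₃
  -- γ derivative
  have hu : HasDerivAt (fun γ : ℝ => 2 * γ + c₂ * r₂ * (1 - p₂hat)) 2 γhat := by
    simpa using ((hasDerivAt_id γhat).const_mul 2).add_const (c₂ * r₂ * (1 - p₂hat))
  have hv : HasDerivAt (fun γ : ℝ => 2 * γ) 2 γhat := by
    simpa using (hasDerivAt_id γhat).const_mul 2
  have hw : HasDerivAt (fun γ : ℝ =>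
      2 * γ + c₂ * r₂ * (1 - p₂hat) + c₃ * r₂ * (p₂hat - p₃hat)) 2 γhat := by
    simpa using hu.add_const (c₃ * r₂ * (p₂hat - p₃hat))
  have hL2 : HasDerivAt (fun γ : ℝ =>
      Real.log ((2 * γ + c₂ * r₂ * (1 - p₂hat)) / (2 * γ)))
      ((2 * (2 * γhat) - t2 * 2) / (2 * γhat) ^ 2 / (t2 / (2 * γhat))) γhat :=
    (hu.div hv (by positivity)).log (ne_of_gt (div_pos ht2 (by positivity)))
  have hL3 : HasDerivAt (fun γ : ℝ =>
      Real.log ((2 * γ + c₂ * r₂ * (1 - p₂hat) + c₃ * r₂ * (p₂hat - p₃hat)) /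
        (2 * γ + c₂ * r₂ * (1 - p₂hat))))
      ((2 * t2 - t3 * 2) / t2 ^ 2 / (t3 / t2)) γhat :=
    (hw.div hu (ne_of_gt ht2)).log (ne_of_gt (div_pos ht3 ht2))
  have hinv : HasDerivAt (fun γ : ℝ =>
      p₃hat / (2 * (2 * γ + c₂ * r₂ * (1 - p₂hat) + c₃ * r₂ * (p₂hat - p₃hat))))
      ((0 * (2 * t3) - p₃hat * (2 * 2)) / (2 * t3) ^ 2) γhat :=
    (hasDerivAt_const γhat p₃hat).div (hw.const_mul 2) (by positivity)
  have HF1 : HasDerivAt (fun γ : ℝ =>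
      (r₂ ^ 2 / 2) * (1 - p₂hat * q₂) * c₂ + (r₂ ^ 2 / 2) * (p₂hat * q₂ - p₃hat * q₃) * c₃
      + γ * r₂
      + α * r₂ * ((1 / (2 * c₂ * r₂)) *
            Real.log ((2 * γ + c₂ * r₂ * (1 - p₂hat)) / (2 * γ))
          + (1 / (2 * c₃ * r₂)) *
            Real.log ((2 * γ + c₂ * r₂ * (1 - p₂hat) + c₃ * r₂ * (p₂hat - p₃hat)) /
              (2 * γ + c₂ * r₂ * (1 - p₂hat)))
          + p₃hat / (2 * (2 * γ + c₂ * r₂ * (1 - p₂hat) + c₃ * r₂ * (p₂hat - p₃hat)))))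
      (1 * r₂ +
        α * r₂ * ((1 / (2 * c₂ * r₂)) * ((2 * (2 * γhat) - t2 * 2) / (2 * γhat) ^ 2 / (t2 / (2 * γhat)))
          + (1 / (2 * c₃ * r₂)) * ((2 * t2 - t3 * 2) / t2 ^ 2 / (t3 / t2))
          + (0 * (2 * t3) - p₃hat * (2 * 2)) / (2 * t3) ^ 2)) γhat :=
    (((hasDerivAt_id γhat).mul_const r₂).const_add
        ((r₂ ^ 2 / 2) * (1 - p₂hat * q₂) * c₂ + (r₂ ^ 2 / 2) * (p₂hat * q₂ - p₃hat * q₃) * c₃)).add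
      (((hL2.const_mul (1 / (2 * c₂ * r₂))).add (hL3.const_mul (1 / (2 * c₃ * r₂)))).add
        hinv |>.const_mul (α * r₂))
  have e1 := HF1.unique h₁
  -- p₂ derivative
  have hu2 : HasDerivAt (fun p₂ : ℝ => 2 * γhat + c₂ * r₂ * (1 - p₂)) (c₂ * r₂ * (0 - 1)) p₂hat :=
    (((hasDerivAt_const p₂hat 1).sub (hasDerivAt_id p₂hat)).const_mul (c₂ * r₂)).const_add
      (2 * γhat)
  have hw2 : HasDerivAt (fun p₂ : ℝ =>
      2 * γhat + c₂ * r₂ * (1 - p₂) + c₃ * r₂ * (p₂ - p₃hat))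
      (c₂ * r₂ * (0 - 1) + c₃ * r₂ * 1) p₂hat :=
    hu2.add (((hasDerivAt_id p₂hat).sub_const p₃hat).const_mul (c₃ * r₂))
  have hP1 : HasDerivAt (fun p₂ : ℝ => (r₂ ^ 2 / 2) * (1 - p₂ * q₂) * c₂)
      (r₂ ^ 2 / 2 * (0 - 1 * q₂) * c₂) p₂hat :=
    (((hasDerivAt_const p₂hat 1).sub ((hasDerivAt_id p₂hat).mul_const q₂)).const_mul
      (r₂ ^ 2 / 2)).mul_const c₂
  have hP2 : HasDerivAt (fun p₂ : ℝ => (r₂ ^ 2 / 2) * (p₂ * q₂ - p₃hat * q₃) * c₃)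
      (r₂ ^ 2 / 2 * (1 * q₂) * c₃) p₂hat :=
    ((((hasDerivAt_id p₂hat).mul_const q₂).sub_const (p₃hat * q₃)).const_mul
      (r₂ ^ 2 / 2)).mul_const c₃
  have hL2' : HasDerivAt (fun p₂ : ℝ =>
      Real.log ((2 * γhat + c₂ * r₂ * (1 - p₂)) / (2 * γhat)))
      ((c₂ * r₂ * (0 - 1) * (2 * γhat) - t2 * 0) / (2 * γhat) ^ 2 / (t2 / (2 * γhat))) p₂hat :=
    (hu2.div (hasDerivAt_const p₂hat (2 * γhat)) (by positivity)).log
      (ne_of_gt (div_pos ht2 (by positivity)))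
  have hL3' : HasDerivAt (fun p₂ : ℝ =>
      Real.log ((2 * γhat + c₂ * r₂ * (1 - p₂) + c₃ * r₂ * (p₂ - p₃hat)) /
        (2 * γhat + c₂ * r₂ * (1 - p₂))))
      (((c₂ * r₂ * (0 - 1) + c₃ * r₂ * 1) * t2 - t3 * (c₂ * r₂ * (0 - 1))) / t2 ^ 2 /
        (t3 / t2)) p₂hat :=
    (hw2.div hu2 (ne_of_gt ht2)).log (ne_of_gt (div_pos ht3 ht2))
  have hinv2 : HasDerivAt (fun p₂ : ℝ =>
      p₃hat / (2 * (2 * γhat + c₂ * r₂ * (1 - p₂) + c₃ * r₂ * (p₂ - p₃hat))))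
      ((0 * (2 * t3) - p₃hat * (2 * (c₂ * r₂ * (0 - 1) + c₃ * r₂ * 1))) / (2 * t3) ^ 2) p₂hat :=
    (hasDerivAt_const p₂hat p₃hat).div (hw2.const_mul 2) (by positivity)
  have HF2 : HasDerivAt (fun p₂ : ℝ =>
      (r₂ ^ 2 / 2) * (1 - p₂ * q₂) * c₂ + (r₂ ^ 2 / 2) * (p₂ * q₂ - p₃hat * q₃) * c₃
      + γhat * r₂
      + α * r₂ * ((1 / (2 * c₂ * r₂)) *
            Real.log ((2 * γhat + c₂ * r₂ * (1 - p₂)) / (2 * γhat))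
          + (1 / (2 * c₃ * r₂)) *
            Real.log ((2 * γhat + c₂ * r₂ * (1 - p₂) + c₃ * r₂ * (p₂ - p₃hat)) /
              (2 * γhat + c₂ * r₂ * (1 - p₂)))
          + p₃hat / (2 * (2 * γhat + c₂ * r₂ * (1 - p₂) + c₃ * r₂ * (p₂ - p₃hat)))))
      ((r₂ ^ 2 / 2 * (0 - 1 * q₂) * c₂ + r₂ ^ 2 / 2 * (1 * q₂) * c₃) +
        α * r₂ * ((1 / (2 * c₂ * r₂)) *
            ((c₂ * r₂ * (0 - 1) * (2 * γhat) - t2 * 0) / (2 * γhat) ^ 2 / (t2 / (2 * γhat)))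
          + (1 / (2 * c₃ * r₂)) *
            (((c₂ * r₂ * (0 - 1) + c₃ * r₂ * 1) * t2 - t3 * (c₂ * r₂ * (0 - 1))) / t2 ^ 2 /
              (t3 / t2))
          + (0 * (2 * t3) - p₃hat * (2 * (c₂ * r₂ * (0 - 1) + c₃ * r₂ * 1))) / (2 * t3) ^ 2))
      p₂hat :=
    ((hP1.add hP2).add_const (γhat * r₂)).add
      ((((hL2'.const_mul (1 / (2 * c₂ * r₂))).add (hL3'.const_mul (1 / (2 * c₃ * r₂)))).add
        hinv2).const_mul (α * r₂))
  have e2 := HF2.unique h₂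
  -- p₃ derivative
  have hw3 : HasDerivAt (fun p₃ : ℝ =>
      2 * γhat + c₂ * r₂ * (1 - p₂hat) + c₃ * r₂ * (p₂hat - p₃)) (c₃ * r₂ * (0 - 1)) p₃hat :=
    (((hasDerivAt_const p₃hat p₂hat).sub (hasDerivAt_id p₃hat)).const_mul (c₃ * r₂)).const_add
      (2 * γhat + c₂ * r₂ * (1 - p₂hat))
  have hP2₃ : HasDerivAt (fun p₃ : ℝ => (r₂ ^ 2 / 2) * (p₂hat * q₂ - p₃ * q₃) * c₃)
      (r₂ ^ 2 / 2 * (0 - 1 * q₃) * c₃) p₃hat :=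
    (((hasDerivAt_const p₃hat (p₂hat * q₂)).sub ((hasDerivAt_id p₃hat).mul_const q₃)).const_mul
      (r₂ ^ 2 / 2)).mul_const c₃
  have hL3₃ : HasDerivAt (fun p₃ : ℝ =>
      Real.log ((2 * γhat + c₂ * r₂ * (1 - p₂hat) + c₃ * r₂ * (p₂hat - p₃)) /
        (2 * γhat + c₂ * r₂ * (1 - p₂hat))))
      ((c₃ * r₂ * (0 - 1) * t2 - t3 * 0) / t2 ^ 2 / (t3 / t2)) p₃hat :=
    (hw3.div (hasDerivAt_const p₃hat (2 * γhat + c₂ * r₂ * (1 - p₂hat))) (ne_of_gt ht2)).log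
      (ne_of_gt (div_pos ht3 ht2))
  have hinv3 : HasDerivAt (fun p₃ : ℝ =>
      p₃ / (2 * (2 * γhat + c₂ * r₂ * (1 - p₂hat) + c₃ * r₂ * (p₂hat - p₃))))
      ((1 * (2 * t3) - p₃hat * (2 * (c₃ * r₂ * (0 - 1)))) / (2 * t3) ^ 2) p₃hat :=
    (hasDerivAt_id p₃hat).div (hw3.const_mul 2) (by positivity)
  have HF3 : HasDerivAt (fun p₃ : ℝ =>
      (r₂ ^ 2 / 2) * (1 - p₂hat * q₂) * c₂ + (r₂ ^ 2 / 2) * (p₂hat * q₂ - p₃ * q₃) * c₃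
      + γhat * r₂
      + α * r₂ * ((1 / (2 * c₂ * r₂)) *
            Real.log ((2 * γhat + c₂ * r₂ * (1 - p₂hat)) / (2 * γhat))
          + (1 / (2 * c₃ * r₂)) *
            Real.log ((2 * γhat + c₂ * r₂ * (1 - p₂hat) + c₃ * r₂ * (p₂hat - p₃)) /
              (2 * γhat + c₂ * r₂ * (1 - p₂hat)))
          + p₃ / (2 * (2 * γhat + c₂ * r₂ * (1 - p₂hat) + c₃ * r₂ * (p₂hat - p₃)))))
      ((0 + r₂ ^ 2 / 2 * (0 - 1 * q₃) * c₃) +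
        α * r₂ * ((0 + (1 / (2 * c₃ * r₂)) *
            ((c₃ * r₂ * (0 - 1) * t2 - t3 * 0) / t2 ^ 2 / (t3 / t2)))
          + (1 * (2 * t3) - p₃hat * (2 * (c₃ * r₂ * (0 - 1)))) / (2 * t3) ^ 2)) p₃hat :=
    (((hasDerivAt_const p₃hat ((r₂ ^ 2 / 2) * (1 - p₂hat * q₂) * c₂)).add hP2₃).add_const
        (γhat * r₂)).add
      ((((hasDerivAt_const p₃hat ((1 / (2 * c₂ * r₂)) *
            Real.log ((2 * γhat + c₂ * r₂ * (1 - p₂hat)) / (2 * γhat)))).add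
          (hL3₃.const_mul (1 / (2 * c₃ * r₂)))).add hinv3).const_mul (α * r₂))
  have e3 := HF3.unique h₃
  field_simp at e1 e2 e3
  have hγn : (2:ℝ) * γhat ≠ 0 := by positivity
  have ht3p : 0 < t3 := by rw [ht3def, ← ht2def]; exact ht3
  have ht2p : 0 < t2 := ht2
  have hD : c₃ - c₂ ≠ 0 := sub_ne_zero.mpr (Ne.symm hcc)
  have R3 : q₃ * t3 ^ 2 = α * p₃hat := by
    have hM : (8 * c₃ ^ 2 * r₂ ^ 3 * t2 ^ 2 * t3 : ℝ) ≠ 0 := by positivity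
    refine mul_left_cancel₀ hM ?_
    linear_combination -(8 * r₂ * t2 * t3) * e3
  have K : (q₂ - q₃) * (t2 * t3) = α * (p₂hat - p₃hat) := by
    have hM : ((32 * (c₂ * r₂) * (2 * γhat) ^ 2 * t2 ^ 2 * t3 * r₂ ^ 2) * (c₃ - c₂) *
        (c₃ * r₂ * t3) : ℝ) ≠ 0 :=
      mul_ne_zero (mul_ne_zero (by positivity) hD) (by positivity)
    refine mul_left_cancel₀ hM ?_
    linear_combination (64 * r₂ ^ 2 * γhat * t2 ^ 2 * t3) * e2
      - (64 * r₂ ^ 2 * γhat * t2 ^ 2 * t3) * (2 * r₂ * c₂ * γhat * (c₃ - c₂) * r₂ * c₃ * t2) * R3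
      + (64 * r₂ ^ 2 * γhat * t2 ^ 2 * t3) * (2 * r₂ * c₂ * γhat * (c₃ - c₂) * α * t3) * ht3def
      - (64 * r₂ ^ 2 * γhat * t2 ^ 2 * t3) * (2 * r₂ * c₂ * γhat * (c₃ - c₂) * α * t3) * ht2def
  have R1 : 2 * γhat * t2 * (1 - q₂) = α * (1 - p₂hat) := by
    have hM : ((16 * t2 ^ 2 * t3 * r₂) * (c₂ * r₂) * (c₃ * r₂) * (2 * γhat) * t3 ^ 2 : ℝ) ≠ 0 := by
      positivity
    refine mul_left_cancel₀ hM ?_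
    linear_combination (32 * t2 ^ 2 * t3 * r₂ ^ 2 * γhat) * e1
      - (32 * t2 ^ 2 * t3 * r₂ ^ 2 * γhat) * (c₂ * c₃ * r₂ * 2 * γhat * t3) * K
      - (32 * t2 ^ 2 * t3 * r₂ ^ 2 * γhat) * (c₂ * c₃ * r₂ * 2 * γhat * t2) * R3
      + (32 * t2 ^ 2 * t3 * r₂ ^ 2 * γhat) * (α * c₃ * t3 ^ 2) * ht2def
      + (32 * t2 ^ 2 * t3 * r₂ ^ 2 * γhat) * (2 * α * c₂ * γhat * t3) * ht3def
      - (32 * t2 ^ 2 * t3 * r₂ ^ 2 * γhat) * (2 * α * c₂ * γhat * t3) * ht2def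
  -- square roots
  set sa : ℝ := Real.sqrt α with hsadef
  set s : ℝ := Real.sqrt (p₃hat / q₃) with hsdef
  set tt : ℝ := Real.sqrt (q₃ / p₃hat) with httdef
  have hsa2 : sa ^ 2 = α := Real.sq_sqrt hα.le
  have hs2 : s ^ 2 = p₃hat / q₃ := Real.sq_sqrt (by positivity)
  have hsapos : 0 < sa := Real.sqrt_pos.mpr hα
  have hspos : 0 < s := Real.sqrt_pos.mpr (by positivity)
  have hst : s * tt = 1 := by
    rw [hsdef, httdef, ← Real.sqrt_mul (by positivity),
      show p₃hat / q₃ * (q₃ / p₃hat) = 1 by field_simp]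
    exact Real.sqrt_one
  have ht3sq : t3 ^ 2 = (sa * s) ^ 2 := by
    refine mul_right_cancel₀ (ne_of_gt hq₃) ?_
    rw [mul_pow, hsa2, hs2]
    field_simp
    linear_combination R3
  have ht3v : t3 = sa * s := by
    calc t3 = Real.sqrt (t3 ^ 2) := (Real.sqrt_sq ht3p.le).symm
    _ = Real.sqrt ((sa * s) ^ 2) := by rw [ht3sq]
    _ = sa * s := Real.sqrt_sq (by positivity)
  have R1' : 2 * γhat * t2 * (1 - q₂) = sa ^ 2 * (1 - p₂hat) := by
    linear_combination R1 - (1 - p₂hat) * hsa2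
  have K2 : (q₂ - q₃) * t2 * s = sa * (p₂hat - p₃hat) := by
    refine mul_left_cancel₀ (ne_of_gt hsapos) ?_
    linear_combination K - (q₂ - q₃) * t2 * ht3v - (p₂hat - p₃hat) * hsa2
  have K2' : t2 * (q₂ - q₃) = sa * (p₂hat - p₃hat) * tt := by
    linear_combination tt * K2 - t2 * (q₂ - q₃) * hst
  have G1 : γhat * (2 * (1 - q₂) * (p₂hat - p₃hat)) = sa * (1 - p₂hat) * (q₂ - q₃) * s := by
    refine mul_right_cancel₀ (ne_of_gt (mul_pos ht2p hspos)) ?_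
    linear_combination ((p₂hat - p₃hat) * s) * R1' - (sa * s * (1 - p₂hat)) * K2
  clear e1 e2 e3 h₁ h₂ h₃ hg₃ HF1 HF2 HF3 hL2 hL3 hinv hu hv hw hu2 hw2 hP1 hP2 hL2' hL3' hinv2 hw3 hP2₃ hL3₃ hinv3 R3 K R1 ht3sq
  have h1q : (0:ℝ) < 1 - q₂ := by linarith
  have hqq : (0:ℝ) < q₂ - q₃ := by linarith
  refine ⟨?_, ?_, ?_⟩
  · field_simp
    linear_combination G1
  · field_simp
    linear_combination -((q₂ - q₃) * (1 - q₂) * (p₂hat - p₃hat)) * ht2def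
      + ((1 - q₂) * (p₂hat - p₃hat)) * K2' - (q₂ - q₃) * G1
  · field_simp
    linear_combination (q₂ - q₃) * ht2def - (q₂ - q₃) * ht3def + (q₂ - q₃) * ht3v - K2'
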